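/- If u ∈ L^p(ℝ^N) (1 ≤ p < ∞, N ≥ 2) is a radial, radially non-increasing function (0 ≤ u(x) ≤ u(y) whenever |x| ≥ |y|), then |u(x)| ≤ |x|^(-N/p) · (N/ω_{N-1})^{1/p} · ‖u‖_{L^p(ℝ^N)} for every x ≠ 0, where ω_{N-1} is the (N-1)-dimensional measure of the unit (N-1)-sphere. -/

import Mathlib

open Real MeasureTheory

theorem stmt_4 (N : ℕ) (hN : 2 ≤ N) (p : ℝ) (hp : 1 ≤ p)
    (u : EuclideanSpace ℝ (Fin N) → ℝ)
    (hnn : ∀ x, 0 ≤ u x)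
    (hrad : ∀ x y : EuclideanSpace ℝ (Fin N), ‖y‖ ≤ ‖x‖ → u x ≤ u y)
    (hint : Integrable (fun x => u x ^ p)) :
    ∀ x : EuclideanSpace ℝ (Fin N), x ≠ 0 →
      |u x| ≤ ‖x‖ ^ (-(N : ℝ) / p) *
        ((N : ℝ) /
          ((N : ℝ) * (volume (Metric.ball (0 : EuclideanSpace ℝ (Fin N)) 1)).toReal)) ^ (1 / p) *
        (∫ y, u y ^ p) ^ (1 / p) := by
  intro x hx
  have hp0 : (0:ℝ) < p := lt_of_lt_of_le one_pos hp
  have hr : (0:ℝ) < ‖x‖ := norm_pos_iff.mpr hx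
  haveI : Nontrivial (EuclideanSpace ℝ (Fin N)) := nontrivial_of_ne x 0 hx
  set V1 : ℝ := (volume (Metric.ball (0 : EuclideanSpace ℝ (Fin N)) 1)).toReal with hV1def
  have hV1pos : 0 < V1 := ENNReal.toReal_pos
    (Metric.measure_ball_pos _ _ one_pos).ne' measure_ball_lt_top.ne
  set V : ℝ := (volume (Metric.ball (0 : EuclideanSpace ℝ (Fin N)) ‖x‖)).toReal with hVdef
  have hVeq : V = ‖x‖ ^ (N:ℕ) * V1 := by
    rw [hVdef, Measure.addHaar_ball _ _ hr.le, ENNReal.toReal_mul,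
      ENNReal.toReal_ofReal (by positivity)]
    simp [finrank_euclideanSpace, hV1def]
  have hVpos : 0 < V := by rw [hVeq]; positivity
  have hI0 : 0 ≤ ∫ y, u y ^ p := integral_nonneg (fun y => Real.rpow_nonneg (hnn y) p)
  have key : u x ^ p * V ≤ ∫ y, u y ^ p := by
    have h1 : ∫ _ in Metric.ball (0:EuclideanSpace ℝ (Fin N)) ‖x‖, u x ^ p
        ≤ ∫ y in Metric.ball (0:EuclideanSpace ℝ (Fin N)) ‖x‖, u y ^ p := by
      apply setIntegral_mono_on
      · exact integrableOn_const measure_ball_lt_top.ne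
      · exact hint.integrableOn
      · exact measurableSet_ball
      · intro y hy
        have hyx : ‖y‖ ≤ ‖x‖ := by
          have := mem_ball_zero_iff.mp hy
          linarith
        exact Real.rpow_le_rpow (hnn x) (hrad x y hyx) hp0.le
    have h2 : ∫ y in Metric.ball (0:EuclideanSpace ℝ (Fin N)) ‖x‖, u y ^ p
        ≤ ∫ y, u y ^ p :=
      setIntegral_le_integral hint (ae_of_all _ fun y => Real.rpow_nonneg (hnn y) p)
    calc u x ^ p * V = ∫ _ in Metric.ball (0:EuclideanSpace ℝ (Fin N)) ‖x‖, u x ^ p := by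
          rw [setIntegral_const, smul_eq_mul, mul_comm]
          rfl
      _ ≤ _ := le_trans h1 h2
  have hle : u x ^ p ≤ (∫ y, u y ^ p) / V := (le_div_iff₀ hVpos).mpr key
  have hstep : u x ≤ ((∫ y, u y ^ p) / V) ^ (1/p) := by
    have := Real.rpow_le_rpow (Real.rpow_nonneg (hnn x) p) hle (by positivity : (0:ℝ) ≤ 1/p)
    rwa [← Real.rpow_mul (hnn x), mul_one_div, div_self hp0.ne', Real.rpow_one] at this
  have hNV : (N:ℝ) / ((N:ℝ) * V1) = 1 / V1 := by
    have hNne : ((N:ℝ)) ≠ 0 := Nat.cast_ne_zero.mpr (by omega)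
    field_simp
  calc |u x| = u x := abs_of_nonneg (hnn x)
    _ ≤ ((∫ y, u y ^ p) / V) ^ (1/p) := hstep
    _ = _ := by
        rw [hNV, Real.div_rpow hI0 hVpos.le, hVeq,
          Real.mul_rpow (by positivity) hV1pos.le,
          ← Real.rpow_natCast ‖x‖ N, ← Real.rpow_mul hr.le, mul_one_div, neg_div,
          Real.rpow_neg hr.le, one_div V1, Real.inv_rpow hV1pos.le]
        ring
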